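/- Let $\mathrm{LG}(r, E_\bullet)$ be a prelinked Grassmannian over a field $K$ (i.e., $S = \mathrm{Spec}\,K$), associated to a finite directed graph $G$ connected by directed paths, vector spaces $E_v$ of dimension $d$, and linear maps $f_e$ satisfying the prelinked compatibility condition. Then at every simple point, $\mathrm{LG}(r, E_\bullet)$ is smooth of dimension $r(d-r)$; in particular, the tangent space at a simple point $(F_v)_v$ with chosen data $v_1,\dots,v_r \in V(G)$, $s_i \in F_{v_i}$ is canonically isomorphic to $\bigoplus_{i=1}^r E_{v_i}/F_{v_i}$. -/

import Mathlib

/-- `IsPathTo src tgt u v l`: the list of edges `l` forms a directed path from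
`u` to `v`. -/
def IsPathTo {Vtx Edg : Type*} (src tgt : Edg → Vtx) : Vtx → Vtx → List Edg → Prop
  | u, v, [] => u = v
  | u, v, e :: l => src e = u ∧ IsPathTo src tgt (tgt e) v l

/-- The composite `f_P = f_{e_n} ∘ ⋯ ∘ f_{e_1}` of the matrices along a path. -/
def pathProd {Edg : Type*} {A : Type*} [CommRing A] {d : ℕ}
    (f : Edg → Matrix (Fin d) (Fin d) A) (l : List Edg) : Matrix (Fin d) (Fin d) A :=
  l.foldl (fun acc e => f e * acc) 1

/-- The prelinked Grassmannian compatibility condition. -/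
def Prelinked {Vtx Edg : Type*} (src tgt : Edg → Vtx) {A : Type*} [CommRing A]
    {d : ℕ} (f : Edg → Matrix (Fin d) (Fin d) A) : Prop :=
  ∀ (u v : Vtx) (l l' : List Edg), IsPathTo src tgt u v l → IsPathTo src tgt u v l' →
    ∃ s s' : A, s • pathProd f l = s' • pathProd f l' ∧
      ((∀ l'' : List Edg, IsPathTo src tgt u v l'' → l.length ≤ l''.length) → IsUnit s') ∧
      ((∀ l'' : List Edg, IsPathTo src tgt u v l'' → l'.length ≤ l''.length) → IsUnit s)

/-- Reduction of a submodule of `R^d` along a ring map `g : R →+* S`. -/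
def redSub {R S : Type*} [CommRing R] [CommRing S] (g : R →+* S) {d : ℕ}
    (N : Submodule R (Fin d → R)) : Submodule S (Fin d → S) :=
  Submodule.span S ((fun x i => g (x i)) '' (N : Set (Fin d → R)))

/-- Points of the prelinked Grassmannian over a commutative `K`-algebra `R`:
families of direct-summand submodules of `R^d`, linked by the base-changed maps. -/
def LGpoint {K : Type*} [Field K] {Vtx Edg : Type*} (src tgt : Edg → Vtx) {d : ℕ}
    (f : Edg → Matrix (Fin d) (Fin d) K) (R : Type*) [CommRing R] [Algebra K R]
    (𝓕 : Vtx → Submodule R (Fin d → R)) : Prop :=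
  (∀ v, ∃ c, IsCompl (𝓕 v) c) ∧
  ∀ e : Edg, Submodule.map ((f e).map (algebraMap K R)).mulVecLin (𝓕 (src e)) ≤ 𝓕 (tgt e)

/-! ### Auxiliary material -/

section paths
variable {Vtx Edg : Type*} {src tgt : Edg → Vtx} {A : Type*} [CommRing A] {d : ℕ}
  (f : Edg → Matrix (Fin d) (Fin d) A)

theorem pathProd_foldl (x : Matrix (Fin d) (Fin d) A) (l : List Edg) :
    l.foldl (fun acc e => f e * acc) x = pathProd f l * x := by
  induction l generalizing x with
  | nil => simp [pathProd]
  | cons e l ih =>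
    show l.foldl _ (f e * x) = _
    rw [ih (f e * x)]
    show _ = List.foldl _ (f e * 1) l * x
    rw [ih (f e * 1)]
    simp [mul_assoc]

theorem pathProd_cons (e : Edg) (l : List Edg) :
    pathProd f (e :: l) = pathProd f l * f e := by
  rw [pathProd, List.foldl_cons, pathProd_foldl]; simp

theorem pathProd_concat (l : List Edg) (e : Edg) :
    pathProd f (l ++ [e]) = f e * pathProd f l := by
  rw [pathProd, List.foldl_append, pathProd_foldl]
  simp [pathProd, mul_one]

theorem isPathTo_append {u v w : Vtx} {l l' : List Edg} (h : IsPathTo src tgt u v l)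
    (h' : IsPathTo src tgt v w l') : IsPathTo src tgt u w (l ++ l') := by
  induction l generalizing u with
  | nil => cases h; simpa using h'
  | cons e l ih => exact ⟨h.1, ih h.2⟩

theorem exists_minPath (hconn : ∀ u v : Vtx, ∃ l : List Edg, IsPathTo src tgt u v l)
    (u v : Vtx) : ∃ l, IsPathTo src tgt u v l ∧
      ∀ l', IsPathTo src tgt u v l' → l.length ≤ l'.length := by
  classical
  obtain ⟨l₀, hl₀⟩ := hconn u v
  have hex : ∃ n, ∃ l : List Edg, IsPathTo src tgt u v l ∧ l.length = n := ⟨_, l₀, hl₀, rfl⟩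
  obtain ⟨l, hl, hlen⟩ := Nat.find_spec hex
  refine ⟨l, hl, fun l' hl' => ?_⟩
  rw [hlen]
  exact Nat.find_min' hex ⟨l', hl', rfl⟩

end paths

section vmap
variable {R S : Type*} [CommRing R] [CommRing S] (g : R →+* S) {d : ℕ}

/-- Componentwise application of a ring hom to a vector. -/
def vMap (g : R →+* S) {d : ℕ} (x : Fin d → R) : Fin d → S := fun i => g (x i)

theorem vMap_add (x y : Fin d → R) : vMap g (x + y) = vMap g x + vMap g y := by
  funext i; simp [vMap]

theorem vMap_sub (x y : Fin d → R) : vMap g (x - y) = vMap g x - vMap g y := by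
  funext i; simp [vMap]

theorem vMap_zero : vMap g (0 : Fin d → R) = 0 := by funext i; simp [vMap]

theorem vMap_smul (a : R) (x : Fin d → R) : vMap g (a • x) = g a • vMap g x := by
  funext i; simp [vMap]

theorem vMap_mulVec (M : Matrix (Fin d) (Fin d) R) (x : Fin d → R) :
    vMap g (M.mulVec x) = (M.map g).mulVec (vMap g x) := by
  funext i
  simp [vMap, Matrix.mulVec, dotProduct, map_sum]

end vmap

section red
variable {K : Type*} [Field K] {A B : Type*} [CommRing B] [CommRing A] [Algebra K A] {d r : ℕ}

theorem redSub_span' (g : A →+* B) (T : Set (Fin d → A)) :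
    redSub g (Submodule.span A T) = Submodule.span B ((fun x => vMap g x) '' T) := by
  apply le_antisymm
  · rw [redSub, Submodule.span_le]
    rintro _ ⟨x, hx, rfl⟩
    show vMap g x ∈ _
    induction hx using Submodule.span_induction with
    | mem y hy => exact Submodule.subset_span ⟨y, hy, rfl⟩
    | zero => rw [vMap_zero]; exact Submodule.zero_mem _
    | add y z _ _ hy hz => rw [vMap_add]; exact Submodule.add_mem _ hy hz
    | smul a y _ hy => rw [vMap_smul]; exact Submodule.smul_mem _ _ hy
  · rw [Submodule.span_le]
    rintro _ ⟨x, hx, rfl⟩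
    exact Submodule.subset_span ⟨x, Submodule.subset_span hx, rfl⟩

theorem mem_redSub_lift (ρ : A →+* K) (hρ : ∀ x : K, ρ (algebraMap K A x) = x)
    (N : Submodule A (Fin d → A)) {x : Fin d → K} (hx : x ∈ redSub ρ N) :
    ∃ t ∈ N, vMap ρ t = x := by
  have himg : ∀ y ∈ redSub ρ N, ∃ t ∈ N, vMap ρ t = y := by
    intro y hy
    rw [redSub] at hy
    induction hy using Submodule.span_induction with
    | mem z hz => obtain ⟨t, ht, rfl⟩ := hz; exact ⟨t, ht, rfl⟩
    | zero => exact ⟨0, N.zero_mem, vMap_zero _⟩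
    | add y z _ _ hy hz =>
      obtain ⟨t, ht, rfl⟩ := hy; obtain ⟨u, hu, rfl⟩ := hz
      exact ⟨t + u, N.add_mem ht hu, vMap_add _ _ _⟩
    | smul a y _ hy =>
      obtain ⟨t, ht, rfl⟩ := hy
      refine ⟨algebraMap K A a • t, N.smul_mem _ ht, ?_⟩
      rw [vMap_smul, hρ]
  exact himg x hx

/-- A left inverse matrix for a linearly independent family. -/
theorem exists_dual_matrix (y : Fin r → (Fin d → K)) (hli : LinearIndependent K y) :
    ∃ C : Matrix (Fin r) (Fin d) K, ∀ j, C.mulVec (y j) = Pi.single j 1 := by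
  classical
  set p := Submodule.span K (Set.range y) with hp
  obtain ⟨q, hq⟩ := Submodule.exists_isCompl p
  let π₀ := p.projectionOnto q hq
  let b : Module.Basis (Fin r) K p := Module.Basis.span hli
  let φ : (Fin d → K) →ₗ[K] (Fin r → K) := b.equivFun.toLinearMap ∘ₗ π₀
  refine ⟨LinearMap.toMatrix' φ, fun j => ?_⟩
  have h1 : (LinearMap.toMatrix' φ).mulVec (y j) = φ (y j) := by
    have h := Matrix.toLin'_toMatrix' φ
    calc (LinearMap.toMatrix' φ).mulVec (y j)
        = Matrix.toLin' (LinearMap.toMatrix' φ) (y j) := rfl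
      _ = φ (y j) := by rw [h]
  rw [h1]
  have hyj : y j = (b j : Fin d → K) := (congrArg Subtype.val (Module.Basis.span_apply hli j)).symm
  have hπ : π₀ (y j) = b j := by
    rw [hyj]; exact Submodule.linearProjOfIsCompl_apply_left hq (b j)
  show b.equivFun (π₀ (y j)) = Pi.single j 1
  rw [hπ]
  ext i
  rw [b.equivFun_apply, b.repr_self]
  by_cases h : j = i <;> simp [h, Finsupp.single_apply, Pi.single_apply]

theorem colcomb (x : Fin r → (Fin d → A)) (w : Fin r → A) :
    (Matrix.of fun j i => x i j).mulVec w = ∑ i, w i • x i := by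
  funext j
  simp [Matrix.mulVec, dotProduct, Finset.sum_apply, mul_comm]

theorem exists_isCompl_span (ρ : A →+* K) (hρ : ∀ x : K, ρ (algebraMap K A x) = x)
    (hker : ∀ a : A, ρ a ≠ 0 → IsUnit a)
    (x : Fin r → (Fin d → A)) (hli : LinearIndependent K (fun i => vMap ρ (x i))) :
    ∃ c, IsCompl (Submodule.span A (Set.range x)) c := by
  classical
  obtain ⟨C, hC⟩ := exists_dual_matrix (fun i => vMap ρ (x i)) hli
  set Mσ : Matrix (Fin d) (Fin r) A := Matrix.of fun j i => x i j with hMσ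
  set Mψ : Matrix (Fin r) (Fin d) A := C.map (algebraMap K A) with hMψ
  set N : Matrix (Fin r) (Fin r) A := Mψ * Mσ with hN
  have hNmap : N.map ρ = 1 := by
    ext i j
    have : (N.map ρ) i j = (C.mulVec (vMap ρ (x j))) i := by
      simp only [hN, hMψ, Matrix.map_apply, Matrix.mul_apply, map_sum,
        Matrix.mulVec, dotProduct]
      refine Finset.sum_congr rfl fun k _ => ?_
      simp [hρ, vMap, hMσ]
    rw [this, hC j]
    by_cases h : i = j <;> simp [h, Pi.single_apply, Matrix.one_apply, eq_comm]
  have hdet : IsUnit N.det := by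
    apply hker
    have : ρ N.det = (N.map ρ).det := (RingHom.map_det ρ N).trans rfl
    rw [this, hNmap, Matrix.det_one]
    exact one_ne_zero
  set Pmat : Matrix (Fin d) (Fin d) A := Mσ * (N⁻¹ * Mψ) with hPm
  have hPx : ∀ i, Pmat.mulVec (x i) = x i := by
    intro i
    have hxi : x i = Mσ.mulVec (Pi.single i 1) := by
      funext j
      rw [Matrix.mulVec_single]
      simp [hMσ]
    rw [hxi, Matrix.mulVec_mulVec, hPm]
    have : Mσ * (N⁻¹ * Mψ) * Mσ = Mσ := by
      rw [Matrix.mul_assoc, Matrix.mul_assoc]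
      rw [← hN, Matrix.nonsing_inv_mul N hdet, Matrix.mul_one]
    rw [this]
  have hproj : LinearMap.IsProj (Submodule.span A (Set.range x)) Pmat.mulVecLin := by
    constructor
    · intro v
      show Pmat.mulVec v ∈ _
      rw [hPm, ← Matrix.mulVec_mulVec]
      rw [colcomb]
      exact Submodule.sum_mem _ fun i _ => Submodule.smul_mem _ _
        (Submodule.subset_span (Set.mem_range_self i))
    · intro v hv
      have : Submodule.span A (Set.range x) ≤ LinearMap.ker (Pmat.mulVecLin - LinearMap.id) := by
        rw [Submodule.span_le]
        rintro _ ⟨i, rfl⟩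
        simp only [SetLike.mem_coe, LinearMap.mem_ker, LinearMap.sub_apply, LinearMap.id_apply,
          Matrix.mulVecLin_apply, sub_eq_zero]
        exact hPx i
      have h0 := this hv
      simp only [LinearMap.mem_ker, LinearMap.sub_apply, LinearMap.id_apply,
        Matrix.mulVecLin_apply, sub_eq_zero] at h0
      exact h0
  exact ⟨_, hproj.isCompl⟩

theorem mem_smul_of_vMap_zero (ρ : A →+* K) {N c : Submodule A (Fin d → A)}
    (hc : IsCompl N c) {z : Fin d → A} (hz : z ∈ N) (h0 : vMap ρ z = 0) :
    z ∈ (RingHom.ker ρ) • N := by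
  classical
  let π : (Fin d → A) →ₗ[A] (Fin d → A) := N.subtype.comp (N.projectionOnto c hc)
  have hπz : π z = z := by
    simp only [π, LinearMap.comp_apply]
    rw [Submodule.linearProjOfIsCompl_apply_left hc ⟨z, hz⟩]
    rfl
  have hzsum : z = ∑ j, z j • fun k => if j = k then (1:A) else 0 := pi_eq_sum_univ z
  rw [← hπz, hzsum]
  rw [map_sum]
  refine Submodule.sum_mem _ fun j _ => ?_
  rw [LinearMap.map_smul]
  refine Submodule.smul_mem_smul ?_ ?_
  · have : ρ (z j) = 0 := congrFun h0 j
    exact this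
  · exact ((N.linearProjOfIsCompl c hc) _).2

theorem span_eq_of_red [IsLocalRing A] [IsNoetherianRing A]
    (ρ : A →+* K) (hρ : ∀ x : K, ρ (algebraMap K A x) = x)
    (N : Submodule A (Fin d → A)) (hcompl : ∃ c, IsCompl N c)
    (x : Fin r → (Fin d → A)) (hx : ∀ i, x i ∈ N)
    (hred : redSub ρ N = Submodule.span K (Set.range fun i => vMap ρ (x i))) :
    N = Submodule.span A (Set.range x) := by
  obtain ⟨c, hc⟩ := hcompl
  refine le_antisymm ?_ (Submodule.span_le.mpr ?_)
  swap
  · rintro _ ⟨i, rfl⟩; exact hx i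
  have hFG : N.FG := IsNoetherian.noetherian N
  have hJ : RingHom.ker ρ ≤ Ideal.jacobson ⊥ := by
    rw [IsLocalRing.jacobson_eq_maximalIdeal ⊥ bot_ne_top]
    intro a ha
    rw [IsLocalRing.mem_maximalIdeal]
    intro hu
    have : IsUnit (ρ a) := hu.map ρ
    rw [RingHom.mem_ker.mp ha] at this
    exact not_isUnit_zero this
  refine Submodule.le_of_le_smul_of_le_jacobson_bot hFG hJ ?_
  intro z hz
  have hzred : vMap ρ z ∈ redSub ρ N := Submodule.subset_span ⟨z, hz, rfl⟩
  rw [hred] at hzred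
  obtain ⟨cf, hcf⟩ := (Submodule.mem_span_range_iff_exists_fun K).mp hzred
  set w : Fin d → A := ∑ i, algebraMap K A (cf i) • x i with hw
  have hwspan : w ∈ Submodule.span A (Set.range x) :=
    Submodule.sum_mem _ fun i _ => Submodule.smul_mem _ _
      (Submodule.subset_span (Set.mem_range_self i))
  have hwN : w ∈ N := Submodule.sum_mem _ fun i _ => Submodule.smul_mem _ _ (hx i)
  have hvw : vMap ρ w = vMap ρ z := by
    rw [← hcf]
    funext k
    simp only [vMap, hw, Finset.sum_apply, map_sum, Pi.smul_apply, smul_eq_mul, map_mul, hρ]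
  have hdiff : z - w ∈ (RingHom.ker ρ) • N := by
    refine mem_smul_of_vMap_zero ρ hc (N.sub_mem hz hwN) ?_
    rw [vMap_sub, hvw, sub_self]
  have : z = w + (z - w) := by ring
  rw [this]
  exact Submodule.add_mem _ (Submodule.mem_sup_left hwspan) (Submodule.mem_sup_right hdiff)

end red

section core
variable {K : Type*} [Field K] {Vtx Edg : Type*} {src tgt : Edg → Vtx} {d r : ℕ}
  {f : Edg → Matrix (Fin d) (Fin d) K}

theorem scalar_compare (hpre : Prelinked src tgt f) {u v : Vtx} {l l₀ : List Edg}
    (hl : IsPathTo src tgt u v l) (hl₀ : IsPathTo src tgt u v l₀)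
    (hmin : ∀ l', IsPathTo src tgt u v l' → l₀.length ≤ l'.length) :
    ∃ c : K, pathProd f l = c • pathProd f l₀ := by
  obtain ⟨s, s', h, -, hs⟩ := hpre u v l l₀ hl hl₀
  have hu : s ≠ 0 := (hs hmin).ne_zero
  refine ⟨s⁻¹ * s', ?_⟩
  have := congrArg (fun M => s⁻¹ • M) h
  simpa [smul_smul, inv_mul_cancel₀ hu] using this

theorem matrix_map_smul {A : Type*} [CommRing A] [Algebra K A] (c : K)
    (M : Matrix (Fin d) (Fin d) K) :
    (c • M).map (algebraMap K A) = algebraMap K A c • M.map (algebraMap K A) := by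
  apply Matrix.ext; intro i j
  simp [Matrix.map_apply, Matrix.smul_apply, smul_eq_mul, map_mul]

theorem matrix_map_mul' {A : Type*} [CommRing A] [Algebra K A]
    (M N : Matrix (Fin d) (Fin d) K) :
    (M * N).map (algebraMap K A) = M.map (algebraMap K A) * N.map (algebraMap K A) := by
  apply Matrix.ext; intro i j
  simp [Matrix.map_apply, Matrix.mul_apply, map_sum, map_mul]

theorem path_mem {A : Type*} [CommRing A] [Algebra K A] {𝓕 : Vtx → Submodule A (Fin d → A)}
    (hF : LGpoint src tgt f A 𝓕) {u v : Vtx} {l : List Edg} (hl : IsPathTo src tgt u v l)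
    {t : Fin d → A} (ht : t ∈ 𝓕 u) :
    ((pathProd f l).map (algebraMap K A)).mulVec t ∈ 𝓕 v := by
  induction l generalizing u t with
  | nil =>
    have huv : u = v := hl
    subst huv
    simpa [pathProd, Matrix.map_one (algebraMap K A) (map_zero _) (map_one _),
      Matrix.one_mulVec] using ht
  | cons e l ih =>
    obtain ⟨hsrc, hl'⟩ := hl
    rw [pathProd_cons, matrix_map_mul', ← Matrix.mulVec_mulVec]
    refine ih hl' ?_
    refine hF.2 e ⟨t, ?_, rfl⟩
    rw [hsrc]; exact ht

theorem vMap_gen {A : Type*} [CommRing A] [Algebra K A] (ρ : A →+* K)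
    (hρ : ∀ x : K, ρ (algebraMap K A x) = x) (M : Matrix (Fin d) (Fin d) K) (t : Fin d → A) :
    vMap ρ ((M.map (algebraMap K A)).mulVec t) = M.mulVec (vMap ρ t) := by
  rw [vMap_mulVec, Matrix.map_map]
  have hM : M.map (⇑ρ ∘ ⇑(algebraMap K A)) = M := by
    apply Matrix.ext; intro i j
    simp only [Matrix.map_apply, Function.comp_apply, hρ]
  rw [hM]

theorem spanPoint {A : Type*} [CommRing A] [Algebra K A] (ρ : A →+* K)
    (hρ : ∀ x : K, ρ (algebraMap K A x) = x) (hker : ∀ a : A, ρ a ≠ 0 → IsUnit a)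
    (hpre : Prelinked src tgt f)
    (vsel : Fin r → Vtx) (ssel : Fin r → (Fin d → K)) (Q : Vtx → Fin r → List Edg)
    (hQ : ∀ v i, IsPathTo src tgt (vsel i) v (Q v i))
    (hQmin : ∀ v i l, IsPathTo src tgt (vsel i) v l → (Q v i).length ≤ l.length)
    (hyli : ∀ v, LinearIndependent K (fun i => (pathProd f (Q v i)).mulVec (ssel i)))
    (t : Fin r → (Fin d → A)) (ht : ∀ i, vMap ρ (t i) = ssel i) :
    LGpoint src tgt f A
      (fun v => Submodule.span A (Set.range fun i =>
        ((pathProd f (Q v i)).map (algebraMap K A)).mulVec (t i))) := by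
  constructor
  · intro v
    refine exists_isCompl_span ρ hρ hker _ ?_
    have : (fun i => vMap ρ (((pathProd f (Q v i)).map (algebraMap K A)).mulVec (t i)))
        = fun i => (pathProd f (Q v i)).mulVec (ssel i) := by
      funext i
      rw [vMap_gen ρ hρ, ht]
    rw [this]
    exact hyli v
  · intro e
    rw [Submodule.map_span, Submodule.span_le]
    rintro _ ⟨_, ⟨i, rfl⟩, rfl⟩
    show ((f e).map (algebraMap K A)).mulVec
      (((pathProd f (Q (src e) i)).map (algebraMap K A)).mulVec (t i)) ∈ _
    rw [Matrix.mulVec_mulVec, ← matrix_map_mul', ← pathProd_concat]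
    have hpath : IsPathTo src tgt (vsel i) (tgt e) (Q (src e) i ++ [e]) :=
      isPathTo_append (hQ (src e) i) ⟨rfl, rfl⟩
    obtain ⟨c, hc⟩ := scalar_compare hpre hpath (hQ (tgt e) i) (hQmin (tgt e) i)
    rw [hc, matrix_map_smul, Matrix.smul_mulVec]
    exact Submodule.smul_mem _ _ (Submodule.subset_span (Set.mem_range_self i))

theorem structPoint {A : Type*} [CommRing A] [IsLocalRing A] [IsNoetherianRing A] [Algebra K A]
    (ρ : A →+* K) (hρ : ∀ x : K, ρ (algebraMap K A x) = x)
    (vsel : Fin r → Vtx) (ssel : Fin r → (Fin d → K)) (Q : Vtx → Fin r → List Edg)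
    (hQ : ∀ v i, IsPathTo src tgt (vsel i) v (Q v i))
    (F : Vtx → Submodule K (Fin d → K))
    (hyspan : ∀ v, Submodule.span K
      (Set.range fun i => (pathProd f (Q v i)).mulVec (ssel i)) = F v)
    (𝓖 : Vtx → Submodule A (Fin d → A)) (h𝓖 : LGpoint src tgt f A 𝓖)
    (hred : ∀ v, redSub ρ (𝓖 v) = F v)
    (t : Fin r → (Fin d → A)) (htm : ∀ i, t i ∈ 𝓖 (vsel i))
    (ht : ∀ i, vMap ρ (t i) = ssel i) :
    ∀ v, 𝓖 v = Submodule.span A (Set.range fun i =>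
        ((pathProd f (Q v i)).map (algebraMap K A)).mulVec (t i)) := by
  intro v
  refine span_eq_of_red ρ hρ (𝓖 v) (h𝓖.1 v) _ (fun i => path_mem h𝓖 (hQ v i) (htm i)) ?_
  have : (fun i => vMap ρ (((pathProd f (Q v i)).map (algebraMap K A)).mulVec (t i)))
      = fun i => (pathProd f (Q v i)).mulVec (ssel i) := by
    funext i
    rw [vMap_gen ρ hρ, ht]
  rw [this, hyspan, hred]

end core

/-! ### Dual numbers -/

def dFst (K : Type*) [Field K] : DualNumber K →+* K :=
  (TrivSqZeroExt.fstHom (S := K) (R := K) (M := K)).toRingHom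

section dual
variable {K : Type*} [Field K] {d r : ℕ}

theorem dual_fst_section : ∀ x : K, dFst K (algebraMap K (DualNumber K) x) = x := by
  intro x
  show TrivSqZeroExt.fst (algebraMap K (DualNumber K) x) = x
  rw [TrivSqZeroExt.algebraMap_eq_inl', TrivSqZeroExt.fst_inl]
  simp

theorem dual_ker : ∀ a : DualNumber K, dFst K a ≠ 0 → IsUnit a := by
  intro a ha
  rw [TrivSqZeroExt.isUnit_iff_isUnit_fst]
  exact isUnit_iff_ne_zero.mpr ha

theorem dual_isLocalRing : IsLocalRing (DualNumber K) := by
  refine IsLocalRing.of_isUnit_or_isUnit_one_sub_self fun a => ?_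
  by_cases h : TrivSqZeroExt.fst a = 0
  · right
    refine dual_ker _ ?_
    show TrivSqZeroExt.fst (1 - a) ≠ 0
    rw [TrivSqZeroExt.fst_sub, TrivSqZeroExt.fst_one, h, sub_zero]
    exact one_ne_zero
  · exact Or.inl (dual_ker a h)

theorem dual_isNoetherianRing : IsNoetherianRing (DualNumber K) := by
  have h1 : Module.Finite K (DualNumber K) := inferInstanceAs (Module.Finite K (K × K))
  have h2 : IsNoetherian K (DualNumber K) := by
    infer_instance
  exact isNoetherianRing_iff.mpr (isNoetherian_of_tower K (inferInstance))

theorem rec_snd (g : Fin r → (Fin d → DualNumber K)) (y : Fin r → (Fin d → K))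
    (hfst : ∀ j, vMap (dFst K) (g j) = y j) (hli : LinearIndependent K y)
    {z : Fin d → DualNumber K} (hz : z ∈ Submodule.span (DualNumber K) (Set.range g))
    (hz0 : vMap (dFst K) z = 0) :
    (fun k => (z k).snd) ∈ Submodule.span K (Set.range y) := by
  obtain ⟨c, hc⟩ := (Submodule.mem_span_range_iff_exists_fun (DualNumber K)).mp hz
  have hzk : ∀ k, z k = ∑ j, c j * g j k := by
    intro k
    rw [← hc]
    simp [Finset.sum_apply, Pi.smul_apply, smul_eq_mul]
  have hgfst : ∀ j k, (g j k).fst = y j k := fun j k => congrFun (hfst j) k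
  have hfst0 : ∀ j, (c j).fst = 0 := by
    apply Fintype.linearIndependent_iff.mp hli (fun j => (c j).fst)
    funext k
    have h0 : (z k).fst = 0 := congrFun hz0 k
    rw [hzk k, TrivSqZeroExt.fst_sum] at h0
    simp only [TrivSqZeroExt.fst_mul, hgfst] at h0
    simpa [Finset.sum_apply, smul_eq_mul] using h0
  have hsnd : (fun k => (z k).snd) = ∑ j, (c j).snd • y j := by
    funext k
    rw [hzk k, TrivSqZeroExt.snd_sum]
    simp only [Finset.sum_apply, Pi.smul_apply, smul_eq_mul]
    refine Finset.sum_congr rfl fun j _ => ?_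
    rw [TrivSqZeroExt.snd_mul, hfst0 j, hgfst j k]
    simp
  rw [hsnd]
  exact Submodule.sum_mem _ fun j _ => Submodule.smul_mem _ _
    (Submodule.subset_span (Set.mem_range_self j))

end dual
theorem stmt_13 (K : Type*) [Field K] (Vtx Edg : Type*) [Fintype Vtx] [Fintype Edg]
    (src tgt : Edg → Vtx) (d r : ℕ)
    (f : Edg → Matrix (Fin d) (Fin d) K)
    (hconn : ∀ u v : Vtx, ∃ l : List Edg, IsPathTo src tgt u v l)
    (hpre : Prelinked src tgt f)
    -- the simple `K`-point `(F_v)`: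
    (F : Vtx → Submodule K (Fin d → K))
    (hFrank : ∀ v, Module.finrank K (F v) = r)
    (hFlink : ∀ e : Edg, Submodule.map (f e).mulVecLin (F (src e)) ≤ F (tgt e))
    (vsel : Fin r → Vtx) (ssel : Fin r → (Fin d → K))
    (hssel : ∀ i, ssel i ∈ F (vsel i))
    (hsimple : ∀ v : Vtx, ∃ P : Fin r → List Edg,
      (∀ i, IsPathTo src tgt (vsel i) v (P i)) ∧
      LinearIndependent K (fun i => (pathProd f (P i)).mulVec (ssel i)) ∧
      Submodule.span K (Set.range fun i => (pathProd f (P i)).mulVec (ssel i)) = F v) :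
    -- (1) infinitesimal lifting (smoothness):
    (∀ (A : Type*) [CommRing A] [IsLocalRing A] [IsNoetherianRing A] [Algebra K A]
      (ρ : A →+* K), (∀ x : K, ρ (algebraMap K A x) = x) →
      RingHom.ker ρ = IsLocalRing.maximalIdeal A →
      ∀ (I : Ideal A) (hIρ : I ≤ RingHom.ker ρ)
        (𝓕' : Vtx → Submodule (A ⧸ I) (Fin d → A ⧸ I)),
        LGpoint src tgt f (A ⧸ I) 𝓕' →
        (∀ v, redSub (Ideal.Quotient.lift I ρ fun a ha => hIρ ha) (𝓕' v) = F v) →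
        ∃ 𝓕 : Vtx → Submodule A (Fin d → A),
          LGpoint src tgt f A 𝓕 ∧
          ∀ v, redSub (Ideal.Quotient.mk I) (𝓕 v) = 𝓕' v) ∧
    -- (2) the tangent space is `⊕ᵢ E_{v_i}/F_{v_i}`, of dimension `r(d-r)`:
    Nonempty
      ({ 𝓕 : Vtx → Submodule (DualNumber K) (Fin d → DualNumber K) //
          LGpoint src tgt f (DualNumber K) 𝓕 ∧
          ∀ v, redSub (TrivSqZeroExt.fstHom (S := K) (R := K) (M := K)).toRingHom (𝓕 v)
            = F v } ≃
        ((i : Fin r) → (Fin d → K) ⧸ F (vsel i))) ∧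
    (Module.finrank K ((i : Fin r) → (Fin d → K) ⧸ F (vsel i)) = r * (d - r)) := by
  classical
  -- a system of minimal paths
  obtain ⟨Q, hQQ⟩ := Classical.axiomOfChoice (fun v : Vtx =>
    Classical.axiomOfChoice (fun i : Fin r => exists_minPath hconn (vsel i) v))
  have hQ : ∀ v i, IsPathTo src tgt (vsel i) v (Q v i) := fun v i => (hQQ v i).1
  have hQmin : ∀ v i l, IsPathTo src tgt (vsel i) v l → (Q v i).length ≤ l.length :=
    fun v i => (hQQ v i).2
  -- the standard basis at each vertex
  set y : Vtx → Fin r → (Fin d → K) :=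
    fun v i => (pathProd f (Q v i)).mulVec (ssel i) with hy
  have hkey : ∀ v, LinearIndependent K (y v) ∧
      Submodule.span K (Set.range (y v)) = F v := by
    intro v
    obtain ⟨P, hP, hPli, hPspan⟩ := hsimple v
    have hcmp : ∀ i, ∃ c : K, pathProd f (P i) = c • pathProd f (Q v i) :=
      fun i => scalar_compare hpre (hP i) (hQ v i) (hQmin v i)
    choose c hc using hcmp
    have hx : ∀ i, (pathProd f (P i)).mulVec (ssel i) = c i • y v i := by
      intro i
      rw [hc i, Matrix.smul_mulVec]
    have hcne : ∀ i, c i ≠ 0 := by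
      intro i h0
      have := hPli.ne_zero i
      rw [hx i, h0, zero_smul] at this
      exact this rfl
    constructor
    · have h1 : LinearIndependent K (fun i => (pathProd f (P i)).mulVec (ssel i)) := hPli
      have h2 := h1.units_smul (fun i => (Units.mk0 (c i) (hcne i))⁻¹)
      have h3 : ((fun i => (Units.mk0 (c i) (hcne i))⁻¹) •
          fun i => (pathProd f (P i)).mulVec (ssel i)) = y v := by
        funext i
        show ((Units.mk0 (c i) (hcne i))⁻¹ : Kˣ) • ((pathProd f (P i)).mulVec (ssel i)) = _
        rw [hx i, Units.smul_def, smul_smul]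
        have : ((Units.mk0 (c i) (hcne i))⁻¹ : Kˣ) = Units.mk0 (c i)⁻¹ (inv_ne_zero (hcne i)) := by
          ext; simp
        rw [this]
        show ((c i)⁻¹ * c i) • y v i = y v i
        rw [inv_mul_cancel₀ (hcne i), one_smul]
      rwa [h3] at h2
    · rw [← hPspan]
      apply le_antisymm <;> rw [Submodule.span_le] <;> rintro _ ⟨i, rfl⟩
      · show y v i ∈ _
        have : y v i = (c i)⁻¹ • ((pathProd f (P i)).mulVec (ssel i)) := by
          rw [hx i, smul_smul, inv_mul_cancel₀ (hcne i), one_smul]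
        rw [this]
        exact Submodule.smul_mem _ _ (Submodule.subset_span (Set.mem_range_self i))
      · show (pathProd f (P i)).mulVec (ssel i) ∈ _
        rw [hx i]
        exact Submodule.smul_mem _ _ (Submodule.subset_span (Set.mem_range_self i))
  have hyli : ∀ v, LinearIndependent K (y v) := fun v => (hkey v).1
  have hyspan : ∀ v, Submodule.span K (Set.range (y v)) = F v := fun v => (hkey v).2
  refine ⟨?_, ?_, ?_⟩
  · -- Part (1): infinitesimal lifting
    intro A _ _ _ _ ρ hρ hkerρ I hIρ 𝓕' h𝓕' hred
    have hItop : I ≠ ⊤ := by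
      intro hI
      have h1 : (1 : A) ∈ I := hI ▸ Submodule.mem_top
      have := hIρ h1
      rw [RingHom.mem_ker, map_one] at this
      exact one_ne_zero this
    haveI : Nontrivial (A ⧸ I) := Ideal.Quotient.nontrivial_iff.mpr hItop
    haveI : IsLocalRing (A ⧸ I) :=
      IsLocalRing.of_surjective' (Ideal.Quotient.mk I) Ideal.Quotient.mk_surjective
    set ρ' := Ideal.Quotient.lift I ρ (fun a ha => hIρ ha) with hρ'def
    have hρ'mk : ∀ a : A, ρ' (Ideal.Quotient.mk I a) = ρ a := fun a =>
      Ideal.Quotient.lift_mk I _ _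
    have halgq : ∀ x : K, algebraMap K (A ⧸ I) x = Ideal.Quotient.mk I (algebraMap K A x) :=
      fun x => by rw [IsScalarTower.algebraMap_eq K A (A ⧸ I)]; rfl
    have hρ' : ∀ x : K, ρ' (algebraMap K (A ⧸ I) x) = x := by
      intro x
      rw [halgq, hρ'mk, hρ]
    have hkerA : ∀ a : A, ρ a ≠ 0 → IsUnit a := by
      intro a ha
      by_contra hu
      have : a ∈ IsLocalRing.maximalIdeal A := hu
      rw [← hkerρ] at this
      exact ha this
    -- choose generators of 𝓕' lifting the ssel
    have hsel' : ∀ i, ∃ t ∈ 𝓕' (vsel i), vMap ρ' t = ssel i := by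
      intro i
      refine mem_redSub_lift ρ' hρ' _ ?_
      rw [hred (vsel i)]
      exact hssel i
    choose t' ht'm ht' using hsel'
    have hstruct := structPoint ρ' hρ' vsel ssel Q hQ F hyspan 𝓕' h𝓕' hred t' ht'm ht'
    -- lift the generators to A
    have hlift : ∀ i k, ∃ a : A, Ideal.Quotient.mk I a = t' i k := fun i k =>
      Ideal.Quotient.mk_surjective _
    choose t htmk using hlift
    have hvt' : ∀ i, vMap (Ideal.Quotient.mk I) (t i) = t' i := fun i => funext (htmk i)
    have hvt : ∀ i, vMap ρ (t i) = ssel i := by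
      intro i; funext k
      show ρ (t i k) = ssel i k
      rw [← hρ'mk, htmk]
      exact congrFun (ht' i) k
    refine ⟨fun v => Submodule.span A (Set.range fun i =>
        ((pathProd f (Q v i)).map (algebraMap K A)).mulVec (t i)),
      spanPoint ρ hρ hkerA hpre vsel ssel Q hQ hQmin hyli t hvt, ?_⟩
    intro v
    rw [redSub_span', hstruct v, ← Set.range_comp]
    have hfun : ((fun x => vMap (Ideal.Quotient.mk I) x) ∘ fun i =>
        ((pathProd f (Q v i)).map (algebraMap K A)).mulVec (t i))
        = fun i => ((pathProd f (Q v i)).map (algebraMap K (A ⧸ I))).mulVec (t' i) := by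
      funext i
      show vMap (Ideal.Quotient.mk I) (((pathProd f (Q v i)).map (algebraMap K A)).mulVec (t i))
        = ((pathProd f (Q v i)).map (algebraMap K (A ⧸ I))).mulVec (t' i)
      rw [vMap_mulVec, Matrix.map_map, hvt' i]
      have hMQ : (pathProd f (Q v i)).map (⇑(Ideal.Quotient.mk I) ∘ ⇑(algebraMap K A))
          = (pathProd f (Q v i)).map (algebraMap K (A ⧸ I)) := by
        apply Matrix.ext; intro a b
        simp only [Matrix.map_apply, Function.comp_apply]
        rw [halgq]
      rw [hMQ]
    rw [hfun]

  · -- Part (2): the tangent space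
    haveI hLd : IsLocalRing (DualNumber K) := dual_isLocalRing
    haveI hNd : IsNoetherianRing (DualNumber K) := dual_isNoetherianRing
    have hρd : ∀ x : K, dFst K (algebraMap K (DualNumber K) x) = x := dual_fst_section
    have hkerd : ∀ a : DualNumber K, dFst K a ≠ 0 → IsUnit a := dual_ker
    set tvec : ((i : Fin r) → (Fin d → K) ⧸ F (vsel i)) → Fin r → (Fin d → DualNumber K) :=
      fun q i k => TrivSqZeroExt.inl (ssel i k) + TrivSqZeroExt.inr ((q i).out k) with htvdef
    have htv1 : ∀ q i, vMap (dFst K) (tvec q i) = ssel i := by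
      intro q i; funext k
      show TrivSqZeroExt.fst (TrivSqZeroExt.inl (ssel i k) + TrivSqZeroExt.inr ((q i).out k))
        = ssel i k
      rw [TrivSqZeroExt.fst_add, TrivSqZeroExt.fst_inl, TrivSqZeroExt.fst_inr, add_zero]
    have htv2 : ∀ q i k, (tvec q i k).snd = (q i).out k := by
      intro q i k
      show (TrivSqZeroExt.inl (ssel i k) + TrivSqZeroExt.inr ((q i).out k)).snd = _
      rw [TrivSqZeroExt.snd_add, TrivSqZeroExt.snd_inl, TrivSqZeroExt.snd_inr, zero_add]
    set Ψfun : ((i : Fin r) → (Fin d → K) ⧸ F (vsel i)) →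
        (Vtx → Submodule (DualNumber K) (Fin d → DualNumber K)) :=
      fun q v => Submodule.span (DualNumber K) (Set.range fun i =>
        ((pathProd f (Q v i)).map (algebraMap K (DualNumber K))).mulVec (tvec q i)) with hΨdef
    have hfstgen : ∀ (t : Fin r → Fin d → DualNumber K),
        (∀ i, vMap (dFst K) (t i) = ssel i) → ∀ v j,
        vMap (dFst K) (((pathProd f (Q v j)).map (algebraMap K (DualNumber K))).mulVec (t j))
          = y v j := by
      intro t ht v j
      rw [vMap_gen (dFst K) hρd, ht j]
    have hΨprop : ∀ q, LGpoint src tgt f (DualNumber K) (Ψfun q) ∧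
        ∀ v, redSub (TrivSqZeroExt.fstHom (S := K) (R := K) (M := K)).toRingHom (Ψfun q v)
          = F v := by
      intro q
      constructor
      · exact spanPoint (dFst K) hρd hkerd hpre vsel ssel Q hQ hQmin hyli (tvec q) (htv1 q)
      · intro v
        show redSub (dFst K) (Submodule.span (DualNumber K) (Set.range fun i =>
          ((pathProd f (Q v i)).map (algebraMap K (DualNumber K))).mulVec (tvec q i))) = F v
        rw [redSub_span' (dFst K), ← Set.range_comp]
        have hcomp : ((fun x => vMap (dFst K) x) ∘ fun i =>
            ((pathProd f (Q v i)).map (algebraMap K (DualNumber K))).mulVec (tvec q i))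
            = y v := by
          funext i
          exact hfstgen (tvec q) (htv1 q) v i
        rw [hcomp, hyspan v]
    have hQnil : ∀ i, Q (vsel i) i = [] := by
      intro i
      have hp0 : IsPathTo src tgt (vsel i) (vsel i) [] := rfl
      have := hQmin (vsel i) i [] hp0
      simpa using List.length_eq_zero_iff.mp (Nat.le_zero.mp this)
    have hgen_nil : ∀ (t : Fin d → DualNumber K) i,
        ((pathProd f (Q (vsel i) i)).map (algebraMap K (DualNumber K))).mulVec t = t := by
      intro t i
      rw [hQnil i]
      show ((1 : Matrix (Fin d) (Fin d) K).map (algebraMap K (DualNumber K))).mulVec t = t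
      rw [Matrix.map_one (algebraMap K (DualNumber K)) (map_zero _) (map_one _),
        Matrix.one_mulVec]
    refine ⟨(Equiv.ofBijective (fun q => ⟨Ψfun q, hΨprop q⟩) ⟨?_, ?_⟩).symm⟩
    · -- injectivity
      intro q q' hqq
      have hv : ∀ v, Ψfun q v = Ψfun q' v := fun v =>
        congrFun (congrArg Subtype.val hqq) v
      funext i
      have h1 : tvec q i ∈ Ψfun q (vsel i) := by
        have h := Submodule.subset_span (R := DualNumber K)
          (Set.mem_range_self (f := fun j =>
            ((pathProd f (Q (vsel i) j)).map (algebraMap K (DualNumber K))).mulVec (tvec q j)) i)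
        rwa [hgen_nil (tvec q i) i] at h
      have h2 : tvec q' i ∈ Ψfun q' (vsel i) := by
        have h := Submodule.subset_span (R := DualNumber K)
          (Set.mem_range_self (f := fun j =>
            ((pathProd f (Q (vsel i) j)).map (algebraMap K (DualNumber K))).mulVec (tvec q' j)) i)
        rwa [hgen_nil (tvec q' i) i] at h
      have h1' : tvec q i ∈ Ψfun q' (vsel i) := hv (vsel i) ▸ h1
      have hzmem : tvec q i - tvec q' i ∈ Ψfun q' (vsel i) :=
        Submodule.sub_mem _ h1' h2
      have hz0 : vMap (dFst K) (tvec q i - tvec q' i) = 0 := by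
        rw [vMap_sub, htv1 q i, htv1 q' i, sub_self]
      have hrec := rec_snd (fun j =>
          ((pathProd f (Q (vsel i) j)).map (algebraMap K (DualNumber K))).mulVec (tvec q' j))
        (y (vsel i)) (fun j => hfstgen (tvec q') (htv1 q') (vsel i) j) (hyli (vsel i))
        hzmem hz0
      rw [hyspan (vsel i)] at hrec
      have hsnd : (fun k => ((tvec q i - tvec q' i) k).snd)
          = (fun k => (q i).out k - (q' i).out k) := by
        funext k
        show ((tvec q i k) - (tvec q' i k)).snd = _
        rw [TrivSqZeroExt.snd_sub, htv2, htv2]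
      rw [hsnd] at hrec
      have hmk : (Submodule.Quotient.mk ((q i).out) : (Fin d → K) ⧸ F (vsel i))
          = Submodule.Quotient.mk ((q' i).out) := by
        rw [Submodule.Quotient.eq]
        exact hrec
      calc q i = Submodule.Quotient.mk ((q i).out) := (Quotient.out_eq' (q i)).symm
        _ = Submodule.Quotient.mk ((q' i).out) := hmk
        _ = q' i := Quotient.out_eq' (q' i)
    · -- surjectivity
      rintro ⟨𝓕, hLG, hredF⟩
      have hredF' : ∀ v, redSub (dFst K) (𝓕 v) = F v := hredF
      have hsel2 : ∀ i, ∃ t ∈ 𝓕 (vsel i), vMap (dFst K) t = ssel i := fun i =>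
        mem_redSub_lift (dFst K) hρd _ (by rw [hredF' (vsel i)]; exact hssel i)
      choose t htm htf using hsel2
      set q : (i : Fin r) → (Fin d → K) ⧸ F (vsel i) :=
        fun i => Submodule.Quotient.mk (fun k => (t i k).snd) with hqdef
      have hwmem : ∀ i, (fun k => (q i).out k - (t i k).snd) ∈ F (vsel i) := by
        intro i
        have hq1 : (Submodule.Quotient.mk ((q i).out) : (Fin d → K) ⧸ F (vsel i))
            = Submodule.Quotient.mk (fun k => (t i k).snd) := Quotient.out_eq' (q i)
        exact (Submodule.Quotient.eq (F (vsel i))).mp hq1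
      have htvec_mem : ∀ i, tvec q i ∈ 𝓕 (vsel i) := by
        intro i
        have hdecomp : tvec q i = t i + (fun k => TrivSqZeroExt.inr
            ((q i).out k - (t i k).snd)) := by
          funext k
          show TrivSqZeroExt.inl (ssel i k) + TrivSqZeroExt.inr ((q i).out k)
            = t i k + TrivSqZeroExt.inr ((q i).out k - (t i k).snd)
          apply TrivSqZeroExt.ext
          · rw [TrivSqZeroExt.fst_add, TrivSqZeroExt.fst_add, TrivSqZeroExt.fst_inl,
              TrivSqZeroExt.fst_inr, TrivSqZeroExt.fst_inr, add_zero, add_zero]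
            exact (congrFun (htf i) k).symm
          · rw [TrivSqZeroExt.snd_add, TrivSqZeroExt.snd_add, TrivSqZeroExt.snd_inl,
              TrivSqZeroExt.snd_inr, TrivSqZeroExt.snd_inr, zero_add]
            ring
        rw [hdecomp]
        refine Submodule.add_mem _ (htm i) ?_
        -- the error vector lies in 𝓕 (vsel i)
        have hwF : (fun k => (q i).out k - (t i k).snd)
            ∈ Submodule.span K (Set.range (y (vsel i))) := by
          rw [hyspan (vsel i)]
          exact hwmem i
        obtain ⟨cf, hcf⟩ := (Submodule.mem_span_range_iff_exists_fun K).mp hwF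
        have hkey2 : (fun k => TrivSqZeroExt.inr (M := K) ((q i).out k - (t i k).snd))
            = ∑ j, (TrivSqZeroExt.inr (cf j) : DualNumber K) •
              ((pathProd f (Q (vsel i) j)).map (algebraMap K (DualNumber K))).mulVec (t j) := by
          funext k
          have hfg : ∀ j, (((pathProd f (Q (vsel i) j)).map
              (algebraMap K (DualNumber K))).mulVec (t j) k).fst = y (vsel i) j k :=
            fun j => congrFun (hfstgen t htf (vsel i) j) k
          rw [Finset.sum_apply]
          simp only [Pi.smul_apply, smul_eq_mul]
          apply TrivSqZeroExt.ext
          · rw [TrivSqZeroExt.fst_inr, TrivSqZeroExt.fst_sum]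
            rw [eq_comm]
            apply Finset.sum_eq_zero
            intro j _
            rw [TrivSqZeroExt.fst_mul, TrivSqZeroExt.fst_inr, zero_mul]
          · rw [TrivSqZeroExt.snd_inr, TrivSqZeroExt.snd_sum]
            have hterm : ∀ j ∈ (Finset.univ : Finset (Fin r)), (TrivSqZeroExt.inr (cf j) *
                (((pathProd f (Q (vsel i) j)).map
                  (algebraMap K (DualNumber K))).mulVec (t j) k)).snd
                = cf j * y (vsel i) j k := by
              intro j _
              rw [TrivSqZeroExt.snd_mul, TrivSqZeroExt.fst_inr, TrivSqZeroExt.snd_inr, hfg j]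
              simp [mul_comm]
            rw [Finset.sum_congr rfl hterm]
            have hck := congrFun hcf k
            simpa using hck.symm
        have hmem2 : (∑ j, (TrivSqZeroExt.inr (cf j) : DualNumber K) •
            ((pathProd f (Q (vsel i) j)).map (algebraMap K (DualNumber K))).mulVec (t j))
            ∈ 𝓕 (vsel i) := by
          refine Submodule.sum_mem _ fun j _ => Submodule.smul_mem _ _ ?_
          exact path_mem hLG (hQ (vsel i) j) (htm j)
        exact hkey2.symm ▸ hmem2
      have hstruct2 := structPoint (dFst K) hρd vsel ssel Q hQ F hyspan 𝓕 hLG hredF'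
        (tvec q) htvec_mem (htv1 q)
      refine ⟨q, ?_⟩
      apply Subtype.ext
      show Ψfun q = 𝓕
      funext v
      exact (hstruct2 v).symm
  · -- Part (3): dimension count
    have hpi := Module.finrank_pi_fintype K (M := fun i : Fin r => (Fin d → K) ⧸ F (vsel i))
    rw [hpi]
    have hq : ∀ i : Fin r, Module.finrank K ((Fin d → K) ⧸ F (vsel i)) = d - r := by
      intro i
      have h1 := Submodule.finrank_quotient_add_finrank (F (vsel i))
      rw [hFrank (vsel i)] at h1
      have h2 : Module.finrank K (Fin d → K) = d := by
        simp [Module.finrank_pi]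
      omega
    simp only [hq]
    rw [Finset.sum_const, Finset.card_univ, Fintype.card_fin, smul_eq_mul]
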